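/- Let F : [0,1] → [0,1] be a continuous, strictly increasing surjection whose derivative F′ exists and equals 0 Lebesgue-almost everywhere on [0,1], and let H ⊆ ℝ be a set of cardinality continuum, linearly independent over the rationals ℚ, that contains the terms of a sequence of nonzero reals converging to 0. Then the subalgebra 𝓐 of C([0,1], ℝ) generated by the functions x ↦ e^{r F(x)}, r ∈ H, is dense in C([0,1], ℝ) with respect to the supremum norm, and every nonzero element of 𝓐 is strongly singular. Consequently, the set of strongly singular functions is a densely strongly 𝔠-algebrable subset of C([0,1], ℝ). -/

import Mathlib

open MeasureTheory Set Filter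

/-- A function `[0,1] → ℝ` is strongly singular if it is continuous, of bounded variation,
its derivative exists and is `0` Lebesgue-a.e. on `[0,1]`, and it is not constant on any
nondegenerate subinterval of `[0,1]`. -/
def StronglySingular (f : ℝ → ℝ) : Prop :=
  ContinuousOn f (Icc 0 1) ∧ BoundedVariationOn f (Icc 0 1) ∧
  (∀ᵐ x ∂(volume.restrict (Icc (0:ℝ) 1)), HasDerivAt f 0 x) ∧
  ∀ a b : ℝ, 0 ≤ a → a < b → b ≤ 1 → ∃ x ∈ Icc a b, ∃ y ∈ Icc a b, f x ≠ f y

/-! ### Auxiliary lemmas -/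

lemma SSaux.expHasDeriv (c s t : ℝ) :
    HasDerivAt (fun u => c * Real.exp (s * u)) (c * (s * Real.exp (s * t))) t := by
  have h1 : HasDerivAt (fun u : ℝ => s * u) s t := by
    simpa using (hasDerivAt_id t).const_mul s
  have h2 := (Real.hasDerivAt_exp (s * t)).comp t h1
  simpa [mul_comm] using h2.const_mul c

/-- Linear independence of exponentials, on any nonempty open interval. -/
lemma SSaux.expIndep (A : Finset ℝ) : ∀ α β : ℝ, α < β → ∀ c : ℝ → ℝ,
    (∀ t ∈ Ioo α β, ∑ s ∈ A, c s * Real.exp (s * t) = 0) → ∀ s ∈ A, c s = 0 := by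
  induction A using Finset.induction_on with
  | empty => simp
  | insert s₀ B hs₀ ih =>
    intro α β hαβ c hzero
    have hderiv : ∀ t ∈ Ioo α β,
        ∑ s ∈ insert s₀ B, c s * (s * Real.exp (s * t)) = 0 := by
      intro t ht
      have hf : HasDerivAt (fun u => ∑ s ∈ insert s₀ B, c s * Real.exp (s * u))
          (∑ s ∈ insert s₀ B, c s * (s * Real.exp (s * t))) t :=
        HasDerivAt.fun_sum fun s _ => SSaux.expHasDeriv (c s) s t
      have hzero' : HasDerivAt (fun u => ∑ s ∈ insert s₀ B, c s * Real.exp (s * u)) 0 t := by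
        have hev : (fun u => ∑ s ∈ insert s₀ B, c s * Real.exp (s * u))
            =ᶠ[nhds t] fun _ => (0:ℝ) := by
          filter_upwards [isOpen_Ioo.mem_nhds ht] with u hu using hzero u hu
        exact (hasDerivAt_const t (0:ℝ)).congr_of_eventuallyEq hev
      exact hf.unique hzero'
    have hB : ∀ s ∈ B, c s * (s - s₀) = 0 := by
      refine ih α β hαβ (fun s => c s * (s - s₀)) ?_
      intro t ht
      have h1 := hderiv t ht
      have h2 := hzero t ht
      have key : ∑ s ∈ insert s₀ B, c s * (s - s₀) * Real.exp (s * t) = 0 := by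
        have : ∑ s ∈ insert s₀ B, c s * (s - s₀) * Real.exp (s * t)
            = (∑ s ∈ insert s₀ B, c s * (s * Real.exp (s * t)))
              - s₀ * ∑ s ∈ insert s₀ B, c s * Real.exp (s * t) := by
          rw [Finset.mul_sum, ← Finset.sum_sub_distrib]
          exact Finset.sum_congr rfl fun s _ => by ring
        rw [this, h1, h2]; ring
      rw [Finset.sum_insert hs₀] at key
      simpa using key
    have hBzero : ∀ s ∈ B, c s = 0 := by
      intro s hs
      have hne : s - s₀ ≠ 0 := sub_ne_zero.mpr (fun h => hs₀ (h ▸ hs))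
      exact (mul_eq_zero.mp (hB s hs)).resolve_right hne
    have hmid : (α + β) / 2 ∈ Ioo α β := ⟨by linarith, by linarith⟩
    have h0 := hzero _ hmid
    rw [Finset.sum_insert hs₀] at h0
    rw [Finset.sum_eq_zero (fun s hs => by rw [hBzero s hs, zero_mul]), add_zero] at h0
    have hc₀ : c s₀ = 0 := by
      rcases mul_eq_zero.mp h0 with h | h
      · exact h
      · exact absurd h (Real.exp_ne_zero _)
    intro s hs
    rcases Finset.mem_insert.mp hs with rfl | hs
    · exact hc₀
    · exact hBzero s hs

/-- The characters `s ↦ (x ↦ exp (s * F x))`, as a monoid hom. -/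
noncomputable def SSaux.expChar (F : ℝ → ℝ) : Multiplicative ℝ →* (ℝ → ℝ) where
  toFun s := fun x => Real.exp (Multiplicative.toAdd s * F x)
  map_one' := by funext x; simp
  map_mul' a b := by funext x; simp [add_mul, Real.exp_add]

/-- Evaluation of exponential polynomials, as an algebra hom from the monoid algebra. -/
noncomputable def SSaux.expEval (F : ℝ → ℝ) : AddMonoidAlgebra ℝ ℝ →ₐ[ℝ] (ℝ → ℝ) :=
  AddMonoidAlgebra.lift ℝ (ℝ → ℝ) ℝ (SSaux.expChar F)

lemma SSaux.expEval_apply (F : ℝ → ℝ) (p : AddMonoidAlgebra ℝ ℝ) (x : ℝ) :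
    SSaux.expEval F p x = ∑ s ∈ p.coeff.support, p.coeff s * Real.exp (s * F x) := by
  rw [SSaux.expEval, AddMonoidAlgebra.lift_apply]
  rw [Finsupp.sum, Finset.sum_apply]
  exact Finset.sum_congr rfl fun s _ => rfl

lemma SSaux.expEval_single (F : ℝ → ℝ) (r : ℝ) :
    SSaux.expEval F (AddMonoidAlgebra.single r 1) = fun x => Real.exp (r * F x) := by
  rw [SSaux.expEval, AddMonoidAlgebra.lift_single, one_smul]
  rfl

/-- Nonzero `ℕ`-combinations of a `ℚ`-independent family are nonzero. -/
lemma SSaux.mset_ne_zero (H : Set ℝ) (hH : LinearIndependent ℚ ((↑) : H → ℝ))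
    (f : H →₀ ℕ) (hf : f ≠ 0) : f.sum (fun a n => (n : ℝ) * (a : ℝ)) ≠ 0 := by
  intro h0
  have := linearIndependent_iff'.mp hH f.support (fun a => (f a : ℚ)) ?_
  · apply hf
    ext a
    by_cases ha : a ∈ f.support
    · exact_mod_cast this a ha
    · simpa using Finsupp.notMem_support_iff.mp ha
  · rw [← h0, Finsupp.sum]
    refine Finset.sum_congr rfl fun a _ => ?_
    rw [Rat.smul_def]
    push_cast
    ring

/-- Decomposition of the unital adjoin into scalars plus the non-unital adjoin. -/
lemma SSaux.adjoin_decompose {A : Type*} [CommRing A] [Algebra ℝ A] (s : Set A) (x : A)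
    (hx : x ∈ Algebra.adjoin ℝ s) :
    ∃ c : ℝ, ∃ y ∈ NonUnitalAlgebra.adjoin ℝ s, x = algebraMap ℝ A c + y := by
  induction hx using Algebra.adjoin_induction with
  | mem z hz => exact ⟨0, z, NonUnitalAlgebra.subset_adjoin ℝ hz, by simp⟩
  | algebraMap r => exact ⟨r, 0, zero_mem _, by simp⟩
  | add x y hx hy ihx ihy =>
    obtain ⟨c, u, hu, rfl⟩ := ihx
    obtain ⟨c', v, hv, rfl⟩ := ihy
    exact ⟨c + c', u + v, add_mem hu hv, by rw [map_add]; ring⟩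
  | mul x y hx hy ihx ihy =>
    obtain ⟨c, u, hu, rfl⟩ := ihx
    obtain ⟨c', v, hv, rfl⟩ := ihy
    refine ⟨c * c', c • v + c' • u + u * v,
      add_mem (add_mem (SMulMemClass.smul_mem _ hv) (SMulMemClass.smul_mem _ hu))
        (mul_mem hu hv), ?_⟩
    rw [map_mul, Algebra.smul_def, Algebra.smul_def]
    ring

/-- Bound `|exp v - 1| ≤ exp |v| - 1`. -/
lemma SSaux.abs_exp_sub_one_le (v : ℝ) : |Real.exp v - 1| ≤ Real.exp |v| - 1 := by
  rw [abs_le]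
  constructor
  · nlinarith [Real.add_one_le_exp v, Real.add_one_le_exp |v|, neg_abs_le v]
  · nlinarith [Real.exp_le_exp.mpr (le_abs_self v)]

/-- Theorem 3 of the paper. Let `F : [0,1] → [0,1]` be a continuous
strictly increasing surjection with derivative `0` Lebesgue-a.e., and let `H ⊆ ℝ` have
cardinality continuum, be linearly independent over `ℚ`, and contain the terms of a
sequence of nonzero reals converging to `0`. Then the (non-unital) subalgebra generated by
the functions `x ↦ exp (r * F x)`, `r ∈ H`, is dense in `C([0,1],ℝ)` for the sup norm, and
each of its elements which is nonzero on `[0,1]` is strongly singular. Hence the set of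
strongly singular functions is a densely strongly `𝔠`-algebrable subset of `C([0,1],ℝ)`. -/
theorem stronglySingular_densely_strongly_c_algebrable
    (F : ℝ → ℝ) (hFc : ContinuousOn F (Icc 0 1)) (hFm : StrictMonoOn F (Icc 0 1))
    (hFsurj : F '' Icc 0 1 = Icc 0 1)
    (hF' : ∀ᵐ x ∂(volume.restrict (Icc (0:ℝ) 1)), HasDerivAt F 0 x)
    (H : Set ℝ) (hHcard : Cardinal.mk H = Cardinal.continuum)
    (hH : LinearIndependent ℚ ((↑) : H → ℝ))
    (hseq : ∃ r : ℕ → ℝ, (∀ n, r n ∈ H ∧ r n ≠ 0) ∧ Tendsto r atTop (nhds 0)) :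
    (∀ h : ℝ → ℝ, ContinuousOn h (Icc 0 1) → ∀ ε : ℝ, 0 < ε →
      ∃ g ∈ NonUnitalAlgebra.adjoin ℝ
          {g : ℝ → ℝ | ∃ r ∈ H, g = fun x => Real.exp (r * F x)},
        ∀ x ∈ Icc (0:ℝ) 1, |h x - g x| < ε) ∧
    (∀ g ∈ NonUnitalAlgebra.adjoin ℝ
        {g : ℝ → ℝ | ∃ r ∈ H, g = fun x => Real.exp (r * F x)},
      (∃ x ∈ Icc (0:ℝ) 1, g x ≠ 0) → StronglySingular g) := by
  classical
  set gens : Set (ℝ → ℝ) := {g : ℝ → ℝ | ∃ r ∈ H, g = fun x => Real.exp (r * F x)} with hgens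
  -- The set of admissible exponents
  set Mset : Set ℝ := {s : ℝ | ∃ f : H →₀ ℕ, f ≠ 0 ∧ s = f.sum fun a n => (n : ℝ) * (a : ℝ)}
    with hMset
  have hMne : ∀ s ∈ Mset, s ≠ 0 := by
    rintro s ⟨f, hf, rfl⟩
    exact SSaux.mset_ne_zero H hH f hf
  have hMadd : ∀ s ∈ Mset, ∀ t ∈ Mset, s + t ∈ Mset := by
    rintro s ⟨f, hf, rfl⟩ t ⟨g, hg, rfl⟩
    refine ⟨f + g, ?_, ?_⟩
    · intro h
      apply hf
      ext a
      simp only [Finsupp.coe_zero, Pi.zero_apply]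
      have h2 : f a + g a = 0 := by
        rw [← Finsupp.add_apply, h, Finsupp.coe_zero, Pi.zero_apply]
      omega
    · rw [Finsupp.sum_add_index' (fun a => by simp) (fun a n m => by push_cast; ring)]
  have hMH : H ⊆ Mset := by
    intro r hr
    refine ⟨Finsupp.single ⟨r, hr⟩ 1, by
      intro h
      have := congrFun (congrArg (fun f : H →₀ ℕ => (f : H → ℕ)) h) ⟨r, hr⟩
      simp at this, ?_⟩
    rw [Finsupp.sum_single_index (by simp)]
    simp
  -- Every element of the non-unital adjoin is an exponential polynomial in `F`
  have hrep : ∀ g ∈ NonUnitalAlgebra.adjoin ℝ gens,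
      ∃ p : AddMonoidAlgebra ℝ ℝ, ↑p.coeff.support ⊆ Mset ∧ g = SSaux.expEval F p := by
    intro g hg
    induction hg using NonUnitalAlgebra.adjoin_induction with
    | mem x hx =>
      obtain ⟨r, hr, rfl⟩ := hx
      refine ⟨AddMonoidAlgebra.single r 1, ?_, (SSaux.expEval_single F r).symm⟩
      rw [AddMonoidAlgebra.coeff_single, Finsupp.support_single_ne_zero r one_ne_zero]
      simpa using hMH hr
    | add x y hx hy ihx ihy =>
      obtain ⟨p, hp, rfl⟩ := ihx
      obtain ⟨q, hq, rfl⟩ := ihy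
      refine ⟨p + q, ?_, (map_add _ _ _).symm⟩
      intro s hs
      rcases Finset.mem_union.mp (Finsupp.support_add (g₁ := p.coeff) (g₂ := q.coeff) hs) with h | h
      · exact hp h
      · exact hq h
    | zero => exact ⟨0, by simp, (map_zero _).symm⟩
    | mul x y hx hy ihx ihy =>
      obtain ⟨p, hp, rfl⟩ := ihx
      obtain ⟨q, hq, rfl⟩ := ihy
      refine ⟨p * q, ?_, (map_mul _ _ _).symm⟩
      intro s hs
      obtain ⟨a, ha, b, hb, rfl⟩ := Finset.mem_add.mp (AddMonoidAlgebra.support_coeff_mul_subset p q hs)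
      exact hMadd a (hp ha) b (hq hb)
    | smul r x hx ih =>
      obtain ⟨p, hp, rfl⟩ := ih
      exact ⟨r • p, subset_trans (Finset.coe_subset.mpr (Finsupp.support_smul (b := r) (g := p.coeff))) hp,
        (map_smul _ _ _).symm⟩
  have hFmem : ∀ x ∈ Icc (0:ℝ) 1, F x ∈ Icc (0:ℝ) 1 := by
    intro x hx
    rw [← hFsurj]
    exact mem_image_of_mem F hx
  constructor
  · -- density
    intro h hcont ε hε
    obtain ⟨r, hrH, hrt⟩ := hseq
    haveI : CompactSpace (Icc (0:ℝ) 1) := isCompact_iff_compactSpace.mp isCompact_Icc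
    have hFC : Continuous (fun x : Icc (0:ℝ) 1 => F ↑x) := hFc.restrict
    set e : ℝ → C(Icc (0:ℝ) 1, ℝ) :=
      fun s => ⟨fun x => Real.exp (s * F ↑x),
        Real.continuous_exp.comp (continuous_const.mul hFC)⟩ with hedef
    set A : Subalgebra ℝ C(Icc (0:ℝ) 1, ℝ) := Algebra.adjoin ℝ (e '' H) with hAdef
    have hsep : A.SeparatesPoints := by
      intro x y hxy
      refine ⟨_, ⟨e (r 0), Algebra.subset_adjoin (mem_image_of_mem e (hrH 0).1), rfl⟩, ?_⟩
      have hFne : F ↑x ≠ F ↑y := fun hEq => hxy (Subtype.ext (hFm.injOn x.2 y.2 hEq))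
      simp only [hedef, ContinuousMap.coe_mk]
      intro hEq
      exact hFne (mul_left_cancel₀ (hrH 0).2 (Real.exp_eq_exp.mp hEq))
    have htop := ContinuousMap.subalgebra_topologicalClosure_eq_top_of_separatesPoints A hsep
    set hC : C(Icc (0:ℝ) 1, ℝ) := ⟨fun x => h ↑x, hcont.restrict⟩ with hhC
    have hclos : hC ∈ closure (A : Set C(Icc (0:ℝ) 1, ℝ)) := by
      have : hC ∈ A.topologicalClosure := by rw [htop]; trivial
      exact this
    obtain ⟨φ, hφA, hφd⟩ := Metric.mem_closure_iff.mp hclos (ε/2) (by linarith)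
    obtain ⟨c, ψ, hψ, hφeq⟩ := SSaux.adjoin_decompose (e '' H) φ hφA
    -- transfer from C(I,ℝ) to ℝ → ℝ
    have htrans : ∀ χ ∈ NonUnitalAlgebra.adjoin ℝ (e '' H),
        ∃ g ∈ NonUnitalAlgebra.adjoin ℝ gens, ∀ x : Icc (0:ℝ) 1, g ↑x = χ x := by
      intro χ hχ
      induction hχ using NonUnitalAlgebra.adjoin_induction with
      | mem f hf =>
        obtain ⟨s, hsH, rfl⟩ := hf
        exact ⟨fun x => Real.exp (s * F x),
          NonUnitalAlgebra.subset_adjoin ℝ ⟨s, hsH, rfl⟩, fun x => rfl⟩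
      | add f g hf hg ihf ihg =>
        obtain ⟨u, hu, hueq⟩ := ihf
        obtain ⟨v, hv, hveq⟩ := ihg
        exact ⟨u + v, add_mem hu hv, fun x => by
          simp only [Pi.add_apply, ContinuousMap.add_apply, hueq x, hveq x]⟩
      | zero => exact ⟨0, zero_mem _, fun x => rfl⟩
      | mul f g hf hg ihf ihg =>
        obtain ⟨u, hu, hueq⟩ := ihf
        obtain ⟨v, hv, hveq⟩ := ihg
        exact ⟨u * v, mul_mem hu hv, fun x => by
          simp only [Pi.mul_apply, ContinuousMap.mul_apply, hueq x, hveq x]⟩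
      | smul a f hf ihf =>
        obtain ⟨u, hu, hueq⟩ := ihf
        exact ⟨a • u, SMulMemClass.smul_mem a hu, fun x => by
          simp only [Pi.smul_apply, ContinuousMap.smul_apply, hueq x]⟩
    obtain ⟨ψ', hψ'mem, hψ'eq⟩ := htrans ψ hψ
    set δ : ℝ := ε / (2 * (|c| + 1)) with hδdef
    have hδpos : 0 < δ := by positivity
    have htend : Tendsto (fun n => Real.exp |r n| - 1) atTop (nhds 0) := by
      have hcont' : Continuous fun t : ℝ => Real.exp |t| - 1 :=
        (Real.continuous_exp.comp continuous_abs).sub continuous_const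
      have := ((hcont'.tendsto 0).comp hrt)
      simpa [Function.comp_def] using this
    have hev : ∀ᶠ n in atTop, Real.exp |r n| - 1 < δ :=
      htend.eventually_lt_const hδpos
    obtain ⟨n, hn⟩ := hev.exists
    have hgen : (fun x => Real.exp (r n * F x)) ∈ NonUnitalAlgebra.adjoin ℝ gens :=
      NonUnitalAlgebra.subset_adjoin ℝ ⟨r n, (hrH n).1, rfl⟩
    refine ⟨(fun x => c * Real.exp (r n * F x)) + ψ', add_mem ?_ hψ'mem, ?_⟩
    · have hre : (fun x => c * Real.exp (r n * F x))
          = c • (fun x => Real.exp (r n * F x)) := rfl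
      rw [hre]
      exact SMulMemClass.smul_mem c hgen
    · intro x hx
      set x' : Icc (0:ℝ) 1 := ⟨x, hx⟩ with hx'
      have h1 : |h x - φ x'| < ε / 2 := by
        calc |h x - φ x'| = dist (hC x') (φ x') := by rw [Real.dist_eq]; rfl
          _ ≤ dist hC φ := ContinuousMap.dist_apply_le_dist x'
          _ < ε / 2 := hφd
      have hφx : φ x' = c + ψ' x := by
        rw [hφeq]
        simp only [ContinuousMap.add_apply, algebraMap_apply, hψ'eq x']
        norm_num
        exact (hψ'eq x').symm
      have hexp1 : 1 ≤ Real.exp |r n| := Real.one_le_exp (abs_nonneg _)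
      have h2 : |φ x' - ((fun x => c * Real.exp (r n * F x)) + ψ') x|
          ≤ |c| * (Real.exp |r n| - 1) := by
        rw [hφx]
        simp only [Pi.add_apply]
        have hre2 : c + ψ' x - (c * Real.exp (r n * F x) + ψ' x)
            = c * (1 - Real.exp (r n * F x)) := by ring
        rw [hre2, abs_mul]
        refine mul_le_mul_of_nonneg_left ?_ (abs_nonneg c)
        rw [abs_sub_comm]
        have hFx := hFmem x hx
        have hFxabs : |F x| ≤ 1 := abs_le.mpr ⟨by linarith [hFx.1], hFx.2⟩
        have hv : |r n * F x| ≤ |r n| := by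
          rw [abs_mul]
          nlinarith [abs_nonneg (r n)]
        calc |Real.exp (r n * F x) - 1| ≤ Real.exp |r n * F x| - 1 :=
              SSaux.abs_exp_sub_one_le _
          _ ≤ Real.exp |r n| - 1 := by linarith [Real.exp_le_exp.mpr hv]
      have h3 : |c| * (Real.exp |r n| - 1) < ε / 2 := by
        have h5 : Real.exp |r n| - 1 < δ := hn
        have h6 : 0 ≤ Real.exp |r n| - 1 := by linarith
        have h7 : (|c| + 1) * δ = ε / 2 := by
          rw [hδdef]
          field_simp
        nlinarith [abs_nonneg c]
      calc |h x - ((fun x => c * Real.exp (r n * F x)) + ψ') x|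
          ≤ |h x - φ x'| + |φ x' - ((fun x => c * Real.exp (r n * F x)) + ψ') x| := by
            have := abs_add_le (h x - φ x') (φ x' - ((fun x => c * Real.exp (r n * F x)) + ψ') x)
            simpa using this
        _ < ε / 2 + ε / 2 := by
            have := lt_of_le_of_lt h2 h3
            linarith
        _ = ε := by ring
  · -- strong singularity
    rintro g hg ⟨x₀, hx₀I, hx₀⟩
    obtain ⟨p, hps, rfl⟩ := hrep g hg
    set P : ℝ → ℝ := fun t => ∑ s ∈ p.coeff.support, p.coeff s * Real.exp (s * t) with hPdef
    have hgp : SSaux.expEval F p = fun x => P (F x) :=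
      funext fun x => SSaux.expEval_apply F p x
    have hPd : ∀ t, HasDerivAt P (∑ s ∈ p.coeff.support, p.coeff s * (s * Real.exp (s * t))) t :=
      fun t => HasDerivAt.fun_sum fun s _ => SSaux.expHasDeriv (p.coeff s) s t
    have hPc : Continuous P :=
      continuous_iff_continuousAt.mpr fun t => (hPd t).continuousAt
    rw [hgp] at hx₀ ⊢
    refine ⟨hPc.comp_continuousOn hFc, ?_, ?_, ?_⟩
    · -- bounded variation
      have hFBV : BoundedVariationOn F (Icc 0 1) := by
        have h := (hFm.monotoneOn).eVariationOn_le
          (left_mem_Icc.mpr zero_le_one) (right_mem_Icc.mpr zero_le_one)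
        rw [inter_self] at h
        exact ne_top_of_le_ne_top ENNReal.ofReal_ne_top h
      set C : ℝ := ∑ s ∈ p.coeff.support, |p.coeff s| * (|s| * Real.exp |s|) with hCdef
      have hC0 : 0 ≤ C := Finset.sum_nonneg fun s _ => by positivity
      have hbound : ∀ t ∈ Icc (0:ℝ) 1,
          |∑ s ∈ p.coeff.support, p.coeff s * (s * Real.exp (s * t))| ≤ C := by
        intro t ht
        refine (Finset.abs_sum_le_sum_abs _ _).trans (Finset.sum_le_sum fun s _ => ?_)
        rw [abs_mul, abs_mul, abs_of_pos (Real.exp_pos _)]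
        have hst : s * t ≤ |s| := by
          calc s * t ≤ |s * t| := le_abs_self _
          _ = |s| * |t| := abs_mul s t
          _ ≤ |s| * 1 := by
              refine mul_le_mul_of_nonneg_left ?_ (abs_nonneg s)
              rw [abs_le]; exact ⟨by linarith [ht.1], ht.2⟩
          _ = |s| := mul_one _
        exact mul_le_mul_of_nonneg_left
          (mul_le_mul_of_nonneg_left (Real.exp_le_exp.mpr hst) (abs_nonneg s)) (abs_nonneg _)
      have hLip : LipschitzOnWith C.toNNReal P (Icc 0 1) := by
        refine (convex_Icc (0:ℝ) 1).lipschitzOnWith_of_nnnorm_hasDerivWithin_le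
          (f' := fun t => ∑ s ∈ p.coeff.support, p.coeff s * (s * Real.exp (s * t)))
          (fun t ht => (hPd t).hasDerivWithinAt) ?_
        intro t ht
        rw [← NNReal.coe_le_coe, coe_nnnorm, Real.coe_toNNReal _ hC0, Real.norm_eq_abs]
        exact hbound t ht
      exact hLip.comp_boundedVariationOn (fun x hx => hFmem x hx) hFBV
    · -- derivative 0 a.e.
      filter_upwards [hF'] with x hx
      simpa [Function.comp_def] using (hPd (F x)).comp x hx
    · -- not constant on any interval
      intro a b ha hab hb
      by_contra hcon
      push_neg at hcon
      have haI : a ∈ Icc (0:ℝ) 1 := ⟨ha, le_trans hab.le hb⟩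
      have hbI : b ∈ Icc (0:ℝ) 1 := ⟨le_trans ha hab.le, hb⟩
      have hαβ : F a < F b := hFm haI hbI hab
      have h0supp : (0:ℝ) ∉ p.coeff.support := fun h => (hMne 0 (hps h)) rfl
      set c' : ℝ → ℝ := fun s => if s = 0 then -(P (F a)) else p.coeff s with hc'def
      have hclaim : ∀ t ∈ Ioo (F a) (F b),
          ∑ s ∈ insert 0 p.coeff.support, c' s * Real.exp (s * t) = 0 := by
        intro t ht
        obtain ⟨x, hxab, hFx⟩ := intermediate_value_Icc hab.le
          (hFc.mono (Icc_subset_Icc ha hb)) (mem_of_mem_of_subset ht Ioo_subset_Icc_self)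
        have hPt : P t = P (F a) := by
          rw [← hFx]
          exact hcon x hxab a (left_mem_Icc.mpr hab.le)
        rw [Finset.sum_insert h0supp]
        have hrest : ∑ s ∈ p.coeff.support, c' s * Real.exp (s * t)
            = ∑ s ∈ p.coeff.support, p.coeff s * Real.exp (s * t) :=
          Finset.sum_congr rfl fun s hs => by
            rw [hc'def]; simp only [if_neg (hMne s (hps hs))]
        rw [hrest]
        simp only [hc'def, if_pos rfl, zero_mul, Real.exp_zero, mul_one]
        have : ∑ s ∈ p.coeff.support, p.coeff s * Real.exp (s * t) = P t := rfl
        rw [this, hPt]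
        ring
      have hall := SSaux.expIndep (insert 0 p.coeff.support) (F a) (F b) hαβ c' hclaim
      have hP0 : ∀ t, P t = 0 := by
        intro t
        refine Finset.sum_eq_zero fun s hs => ?_
        have hcs : c' s = p.coeff s := by rw [hc'def]; simp only [if_neg (hMne s (hps hs))]
        rw [← hcs, hall s (Finset.mem_insert_of_mem hs), zero_mul]
      exact hx₀ (hP0 (F x₀))
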